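/- Let α, κ, η ∈ ℂ with η ≠ 0, and define the singular Krichever function φ(z) = exp((α − κ)·z)·sinh(η·z)/(η·cosh(η·z) − κ·sinh(η·z)) on the open set U = {z ∈ ℂ : η·cosh(η·z) − κ·sinh(η·z) ≠ 0}. Then φ is holomorphic on U and at every point of U it satisfies φ·φ''' − 3·φ'·φ'' = 6q_1·(φ')² + 12q_2·φ·φ' + 12q_3·φ², where q_1 = −α, 6q_2 = 3α² − 3κ² + 2η², and 6q_3 = −(α − κ)·(α² + κα − 2κ² + 2η²), and φ', φ'', φ''' denote the first three complex derivatives of φ. -/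

import Mathlib

open Complex

namespace SingKrich

noncomputable def EE (a z : ℂ) : ℂ := Complex.exp (a * z)
noncomputable def SS (η z : ℂ) : ℂ := Complex.sinh (η * z)
noncomputable def CC (η z : ℂ) : ℂ := Complex.cosh (η * z)
noncomputable def DD (η κ z : ℂ) : ℂ := η * CC η z - κ * SS η z
noncomputable def DP (η κ z : ℂ) : ℂ := η ^ 2 * SS η z - κ * η * CC η z

noncomputable def F1 (a η κ z : ℂ) : ℂ :=
  EE a z * (a * SS η z * DD η κ z + η ^ 2) / DD η κ z ^ 2
noncomputable def F2 (a η κ z : ℂ) : ℂ :=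
  EE a z * (a ^ 2 * SS η z * DD η κ z ^ 2 + 2 * a * η ^ 2 * DD η κ z - 2 * η ^ 2 * DP η κ z)
    / DD η κ z ^ 3
noncomputable def F3 (a η κ z : ℂ) : ℂ :=
  EE a z * (a ^ 3 * SS η z * DD η κ z ^ 3 + (3 * a ^ 2 - 2 * η ^ 2) * η ^ 2 * DD η κ z ^ 2
      - 6 * a * η ^ 2 * DD η κ z * DP η κ z + 6 * η ^ 2 * DP η κ z ^ 2) / DD η κ z ^ 4

lemma hpyth (η z : ℂ) : CC η z ^ 2 - SS η z ^ 2 = 1 :=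
  Complex.cosh_sq_sub_sinh_sq (η * z)

lemma hE (a z : ℂ) : HasDerivAt (EE a) (a * EE a z) z := by
  have := ((hasDerivAt_id z).const_mul a).cexp
  exact this.congr_deriv (by simp [EE, mul_comm])

lemma hS (η z : ℂ) : HasDerivAt (SS η) (η * CC η z) z := by
  have := ((hasDerivAt_id z).const_mul η).csinh
  exact this.congr_deriv (by simp [SS, CC, mul_comm])

lemma hC (η z : ℂ) : HasDerivAt (CC η) (η * SS η z) z := by
  have := ((hasDerivAt_id z).const_mul η).ccosh
  exact this.congr_deriv (by simp [SS, CC, mul_comm])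

lemma hD (η κ z : ℂ) : HasDerivAt (DD η κ) (DP η κ z) z := by
  have := ((hC η z).const_mul η).sub ((hS η z).const_mul κ)
  have heq : DD η κ = fun w => η * CC η w - κ * SS η w := rfl
  rw [heq]
  refine this.congr_deriv ?_
  rw [DP]; ring

lemma hDP (η κ z : ℂ) : HasDerivAt (DP η κ) (η ^ 2 * DD η κ z) z := by
  have := (((hS η z).const_mul (η ^ 2))).sub ((hC η z).const_mul (κ * η))
  have heq : DP η κ = fun w => η ^ 2 * SS η w - κ * η * CC η w := rfl
  rw [heq]
  refine this.congr_deriv ?_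
  rw [DD]; ring

lemma hF0 (a η κ z : ℂ) (hz : DD η κ z ≠ 0) :
    HasDerivAt (fun w => EE a w * SS η w / DD η κ w) (F1 a η κ z) z := by
  have h := (((hE a z).mul (hS η z)).div (hD η κ z) hz)
  refine h.congr_deriv ?_
  have key : (a * EE a z * SS η z + EE a z * (η * CC η z)) * DD η κ z
      - EE a z * SS η z * DP η κ z = EE a z * (a * SS η z * DD η κ z + η ^ 2) := by
    have h1 := hpyth η z
    simp only [DD, DP]
    linear_combination (η ^ 2 * EE a z) * h1
  simp only [Pi.mul_apply, Pi.add_apply, Pi.sub_apply, Pi.pow_apply]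
  rw [F1, key]

lemma hF1 (a η κ z : ℂ) (hz : DD η κ z ≠ 0) :
    HasDerivAt (F1 a η κ) (F2 a η κ z) z := by
  have hnum : HasDerivAt (fun w => EE a w * (a * SS η w * DD η κ w + η ^ 2))
      (a * EE a z * (a * SS η z * DD η κ z + η ^ 2)
        + EE a z * (a * (η * CC η z) * DD η κ z + a * SS η z * DP η κ z)) z := by
    have h1 := (((hS η z).const_mul a).mul (hD η κ z)).add_const (η ^ 2)
    have h2 := (hE a z).mul h1
    exact h2.congr_deriv (by simp only [Pi.mul_apply, Pi.add_apply, Pi.sub_apply, Pi.pow_apply])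
  have h := hnum.div ((hD η κ z).pow 2) (pow_ne_zero 2 hz)
  have heq : F1 a η κ = fun w => EE a w * (a * SS η w * DD η κ w + η ^ 2) / DD η κ w ^ 2 := rfl
  rw [heq]
  refine h.congr_deriv ?_
  have key : (a * EE a z * (a * SS η z * DD η κ z + η ^ 2)
        + EE a z * (a * (η * CC η z) * DD η κ z + a * SS η z * DP η κ z)) * DD η κ z ^ 2
      - EE a z * (a * SS η z * DD η κ z + η ^ 2) * ((2 : ℕ) * DD η κ z ^ (2 - 1) * DP η κ z)
      = EE a z * (a ^ 2 * SS η z * DD η κ z ^ 2 + 2 * a * η ^ 2 * DD η κ z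
          - 2 * η ^ 2 * DP η κ z) * DD η κ z := by
    have h1 := hpyth η z
    simp only [DD, DP]
    push_cast
    linear_combination (a * EE a z * η ^ 2 * (η * CC η z - κ * SS η z) ^ 2) * h1
  simp only [Pi.mul_apply, Pi.add_apply, Pi.sub_apply, Pi.pow_apply]
  rw [F2, key, div_eq_div_iff (pow_ne_zero 2 (pow_ne_zero 2 hz))
    (pow_ne_zero 3 hz)]
  ring

lemma hF2 (a η κ z : ℂ) (hz : DD η κ z ≠ 0) :
    HasDerivAt (F2 a η κ) (F3 a η κ z) z := by
  have hnum : HasDerivAt (fun w => EE a w *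
      (a ^ 2 * SS η w * DD η κ w ^ 2 + 2 * a * η ^ 2 * DD η κ w - 2 * η ^ 2 * DP η κ w))
      (a * EE a z *
        (a ^ 2 * SS η z * DD η κ z ^ 2 + 2 * a * η ^ 2 * DD η κ z - 2 * η ^ 2 * DP η κ z)
        + EE a z * (a ^ 2 * (η * CC η z) * DD η κ z ^ 2
            + a ^ 2 * SS η z * (2 * DD η κ z * DP η κ z)
            + 2 * a * η ^ 2 * DP η κ z - 2 * η ^ 2 * (η ^ 2 * DD η κ z))) z := by
    have t1 := ((hS η z).const_mul (a ^ 2)).mul ((hD η κ z).pow 2)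
    have t2 := (hD η κ z).const_mul (2 * a * η ^ 2)
    have t3 := (hDP η κ z).const_mul (2 * η ^ 2)
    have h2 := (hE a z).mul ((t1.add t2).sub t3)
    refine h2.congr_deriv ?_
    simp only [Pi.mul_apply, Pi.add_apply, Pi.sub_apply, Pi.pow_apply]
    push_cast
    ring
  have h := hnum.div ((hD η κ z).pow 3) (pow_ne_zero 3 hz)
  have heq : F2 a η κ = fun w => EE a w *
      (a ^ 2 * SS η w * DD η κ w ^ 2 + 2 * a * η ^ 2 * DD η κ w - 2 * η ^ 2 * DP η κ w)
      / DD η κ w ^ 3 := rfl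
  rw [heq]
  refine h.congr_deriv ?_
  have key : (a * EE a z *
        (a ^ 2 * SS η z * DD η κ z ^ 2 + 2 * a * η ^ 2 * DD η κ z - 2 * η ^ 2 * DP η κ z)
        + EE a z * (a ^ 2 * (η * CC η z) * DD η κ z ^ 2
            + a ^ 2 * SS η z * (2 * DD η κ z * DP η κ z)
            + 2 * a * η ^ 2 * DP η κ z - 2 * η ^ 2 * (η ^ 2 * DD η κ z))) * DD η κ z ^ 3
      - EE a z * (a ^ 2 * SS η z * DD η κ z ^ 2 + 2 * a * η ^ 2 * DD η κ z
          - 2 * η ^ 2 * DP η κ z) * ((3 : ℕ) * DD η κ z ^ (3 - 1) * DP η κ z)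
      = EE a z * (a ^ 3 * SS η z * DD η κ z ^ 3
          + (3 * a ^ 2 - 2 * η ^ 2) * η ^ 2 * DD η κ z ^ 2
          - 6 * a * η ^ 2 * DD η κ z * DP η κ z + 6 * η ^ 2 * DP η κ z ^ 2)
          * DD η κ z ^ 2 := by
    have h1 := hpyth η z
    simp only [DD, DP]
    push_cast
    linear_combination (a ^ 2 * EE a z * η ^ 2 * (η * CC η z - κ * SS η z) ^ 4) * h1
  simp only [Pi.mul_apply, Pi.add_apply, Pi.sub_apply, Pi.pow_apply]
  rw [F3, key, div_eq_div_iff (pow_ne_zero 2 (pow_ne_zero 3 hz))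
    (pow_ne_zero 4 hz)]
  ring

end SingKrich

lemma frac_combine (e s d X1 X2 X3 Q1 Q2 Q3 : ℂ) (hd : d ≠ 0)
    (hkey : s * X3 - 3 * (X1 * X2)
      = 6 * Q1 * X1 ^ 2 * d + 12 * Q2 * (s * X1) * d ^ 2 + 12 * Q3 * s ^ 2 * d ^ 3) :
    e * s / d * (e * X3 / d ^ 4) - 3 * (e * X1 / d ^ 2) * (e * X2 / d ^ 3)
      = 6 * Q1 * (e * X1 / d ^ 2) ^ 2 + 12 * Q2 * (e * s / d) * (e * X1 / d ^ 2)
        + 12 * Q3 * (e * s / d) ^ 2 := by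
  have hdi : d * d⁻¹ = 1 := mul_inv_cancel₀ hd
  linear_combination (e ^ 2 * d⁻¹ ^ 5) * hkey +
    (6 * Q1 * e ^ 2 * X1 ^ 2 * d⁻¹ ^ 4
      + 12 * Q2 * e ^ 2 * s * X1 * d⁻¹ ^ 3 * (d * d⁻¹ + 1)
      + 12 * Q3 * e ^ 2 * s ^ 2 * d⁻¹ ^ 2 * (d ^ 2 * d⁻¹ ^ 2 + d * d⁻¹ + 1)) * hdi

open SingKrich in
set_option maxRecDepth 8000 in
set_option maxHeartbeats 2000000 in
/-- The singular Krichever function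
`φ(z) = exp((α - κ)z) sinh(ηz)/(η cosh(ηz) - κ sinh(ηz))` is holomorphic away from the zeros
of the denominator and satisfies the Hirzebruch differential equation there, with parameters
`q₁ = -α`, `6 q₂ = 3α² - 3κ² + 2η²`, `6 q₃ = -(α - κ)(α² + κα - 2κ² + 2η²)`. -/
theorem singular_krichever_satisfies_ODE (α κ η : ℂ) (hη : η ≠ 0)
    (φ : ℂ → ℂ)
    (hφ : ∀ z : ℂ, φ z = Complex.exp ((α - κ) * z) * Complex.sinh (η * z) /
      (η * Complex.cosh (η * z) - κ * Complex.sinh (η * z)))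
    (U : Set ℂ)
    (hU : U = {z : ℂ | η * Complex.cosh (η * z) - κ * Complex.sinh (η * z) ≠ 0})
    (q₁ q₂ q₃ : ℂ) (hq₁ : q₁ = -α) (hq₂ : 6 * q₂ = 3 * α ^ 2 - 3 * κ ^ 2 + 2 * η ^ 2)
    (hq₃ : 6 * q₃ = -((α - κ) * (α ^ 2 + κ * α - 2 * κ ^ 2 + 2 * η ^ 2))) :
    (∀ z ∈ U, AnalyticAt ℂ φ z) ∧
      ∀ z ∈ U,
        φ z * deriv (deriv (deriv φ)) z - 3 * deriv φ z * deriv (deriv φ) z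
          = 6 * q₁ * (deriv φ z) ^ 2 + 12 * q₂ * φ z * deriv φ z + 12 * q₃ * (φ z) ^ 2 := by
  have hφeq : φ = fun w => EE (α - κ) w * SS η w / DD η κ w := by
    funext w; rw [hφ w]; rfl
  have hUz : ∀ z ∈ U, DD η κ z ≠ 0 := by
    intro z hz; rw [hU] at hz; exact hz
  have hUopen : IsOpen U := by
    rw [hU]
    have hc : Continuous fun z : ℂ =>
        η * Complex.cosh (η * z) - κ * Complex.sinh (η * z) := by fun_prop
    exact isOpen_compl_singleton.preimage hc
  have hd0 : ∀ z ∈ U, HasDerivAt φ (F1 (α - κ) η κ z) z := by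
    intro z hz; rw [hφeq]; exact hF0 (α - κ) η κ z (hUz z hz)
  have h1 : ∀ z ∈ U, deriv φ z = F1 (α - κ) η κ z := fun z hz => (hd0 z hz).deriv
  have h2 : ∀ z ∈ U, deriv (deriv φ) z = F2 (α - κ) η κ z := by
    intro z hz
    have he : deriv φ =ᶠ[nhds z] F1 (α - κ) η κ :=
      Filter.eventuallyEq_of_mem (hUopen.mem_nhds hz) h1
    rw [he.deriv_eq, (hF1 (α - κ) η κ z (hUz z hz)).deriv]
  have h3 : ∀ z ∈ U, deriv (deriv (deriv φ)) z = F3 (α - κ) η κ z := by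
    intro z hz
    have he : deriv (deriv φ) =ᶠ[nhds z] F2 (α - κ) η κ :=
      Filter.eventuallyEq_of_mem (hUopen.mem_nhds hz) h2
    rw [he.deriv_eq, (hF2 (α - κ) η κ z (hUz z hz)).deriv]
  constructor
  · intro z hz
    have hdiff : DifferentiableOn ℂ φ U :=
      fun w hw => ((hd0 w hw).differentiableAt).differentiableWithinAt
    exact hdiff.analyticAt (hUopen.mem_nhds hz)
  · intro z hz
    have hzD : DD η κ z ≠ 0 := hUz z hz
    have hq2 : q₂ = (3 * α ^ 2 - 3 * κ ^ 2 + 2 * η ^ 2) / 6 := by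
      field_simp; linear_combination hq₂
    have hq3 : q₃ = -((α - κ) * (α ^ 2 + κ * α - 2 * κ ^ 2 + 2 * η ^ 2)) / 6 := by
      field_simp; linear_combination hq₃
    have hpy := hpyth η z
    rw [h1 z hz, h2 z hz, h3 z hz, hφeq, hq₁, hq2, hq3]
    simp only [F1, F2, F3]
    refine frac_combine (EE (α - κ) z) (SS η z) (DD η κ z) _ _ _ (-α)
      ((3 * α ^ 2 - 3 * κ ^ 2 + 2 * η ^ 2) / 6)
      (-((α - κ) * (α ^ 2 + κ * α - 2 * κ ^ 2 + 2 * η ^ 2)) / 6) hzD ?_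
    simp only [DD, DP]
    linear_combination (6 * SS η z * η ^ 4 * κ ^ 2 - 6 * SS η z * η ^ 6) * hpy
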